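/- Define, for (x,y,t) with t > 0, ψ_E(x,y,t) = ∫₀ᵗ ψ₀(x−s, y, t−s) ds where ψ₀(x,y,t) = (1/π)(t²−2x²−2y²)^{−1/2} for x²+y² < t²/2 and 0 otherwise. Then ψ_E is self-similar, i.e., ψ_E(x,y,t) = ψ_E(x/t, y/t, 1) for all t > 0, and for points (x,y) in the square ◇ = {|x|+|y|<1} outside the closed disc of radius √2/2: ψ_E(x,y,1) = 1 if x > 1/2 and ψ_E(x,y,1) = 0 if x < 1/2. -/

import Mathlib

open MeasureTheory intervalIntegral Set

/-- `ψ₀(x,y,t) = (1/π)(t²−2x²−2y²)^{-1/2}` inside the light cone `x²+y² < t²/2`,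
and `0` outside. -/
noncomputable def psi0 (x y t : ℝ) : ℝ :=
  if x ^ 2 + y ^ 2 < t ^ 2 / 2 then 1 / (Real.pi * Real.sqrt (t ^ 2 - 2 * x ^ 2 - 2 * y ^ 2))
  else 0

/-- `ψ_E(x,y,t) = ∫₀ᵗ ψ₀(x−s,y,t−s) ds`: the solution of the wave equation with a
constant super-sonic source moving east with speed `1`. -/
noncomputable def psiE (x y t : ℝ) : ℝ := ∫ s in (0:ℝ)..t, psi0 (x - s) y (t - s)

lemma psi0_scale {t : ℝ} (ht : 0 < t) (X Y T : ℝ) :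
    psi0 (t * X) (t * Y) (t * T) = psi0 X Y T / t := by
  unfold psi0
  have ht2 : (0:ℝ) < t ^ 2 := by positivity
  have hcond : (t*X)^2 + (t*Y)^2 < (t*T)^2/2 ↔ X^2 + Y^2 < T^2/2 := by
    constructor <;> intro h <;> nlinarith
  by_cases h : X ^ 2 + Y ^ 2 < T ^ 2 / 2
  · rw [if_pos (hcond.2 h), if_pos h]
    have harg : (t*T)^2 - 2*(t*X)^2 - 2*(t*Y)^2 = t^2 * (T^2 - 2*X^2 - 2*Y^2) := by ring
    rw [harg, Real.sqrt_mul ht2.le, Real.sqrt_sq ht.le]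
    rcases eq_or_ne (Real.sqrt (T^2 - 2*X^2 - 2*Y^2)) 0 with hsv | hsv
    · simp [hsv]
    · field_simp
  · rw [if_neg (fun hc => h (hcond.1 hc)), if_neg h, zero_div]

lemma g_meas (a b : ℝ) : Measurable (fun s : ℝ =>
    if 0 < (s - a) * (b - s) then 1 / (Real.pi * Real.sqrt ((s - a) * (b - s))) else 0) := by
  have hq : Measurable (fun s : ℝ => (s - a) * (b - s)) := by fun_prop
  apply Measurable.ite
  · exact measurableSet_lt measurable_const hq
  · exact Measurable.div measurable_const
      (measurable_const.mul (Real.continuous_sqrt.measurable.comp hq))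
  · exact measurable_const

lemma arcsine_aux {a b : ℝ} (hab : a < b) :
    IntervalIntegrable (fun s : ℝ => if 0 < (s - a) * (b - s)
      then 1 / (Real.pi * Real.sqrt ((s - a) * (b - s))) else 0) volume a b ∧
    (∫ s in a..b, (if 0 < (s - a) * (b - s)
      then 1 / (Real.pi * Real.sqrt ((s - a) * (b - s))) else 0)) = 1 := by
  obtain ⟨g, hg⟩ : ∃ g : ℝ → ℝ, g = fun s =>
      if 0 < (s - a) * (b - s) then 1 / (Real.pi * Real.sqrt ((s - a) * (b - s))) else 0 :=
    ⟨_, rfl⟩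
  rw [← hg]
  obtain ⟨c, hc⟩ : ∃ c : ℝ, c = (a + b) / 2 := ⟨_, rfl⟩
  obtain ⟨r, hrdef⟩ : ∃ r : ℝ, r = (b - a) / 2 := ⟨_, rfl⟩
  have hr : 0 < r := by rw [hrdef]; linarith
  have hπ : (0:ℝ) < Real.pi := Real.pi_pos
  obtain ⟨C, hCdef⟩ : ∃ C : ℝ, C = 1 / (Real.pi * Real.sqrt r) := ⟨_, rfl⟩
  have hC : (0:ℝ) < C := by rw [hCdef]; positivity
  -- the comparison bound
  have bound : ∀ u v : ℝ, 0 < u → r ≤ v →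
      1 / (Real.pi * Real.sqrt (u * v)) ≤ C * u ^ (-(1:ℝ)/2) := by
    intro u v hu hv
    have hru : u ^ (-(1:ℝ)/2) = (Real.sqrt u)⁻¹ := by
      rw [Real.sqrt_eq_rpow, ← Real.rpow_neg hu.le]
      norm_num
    have hsu : 0 < Real.sqrt u := Real.sqrt_pos.2 hu
    have hsr : 0 < Real.sqrt r := Real.sqrt_pos.2 hr
    have h2 : C * u ^ (-(1:ℝ)/2) = 1 / (Real.pi * (Real.sqrt r * Real.sqrt u)) := by
      rw [hru, hCdef]; field_simp
    rw [h2]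
    apply one_div_le_one_div_of_le
    · positivity
    · rw [Real.sqrt_mul hu.le]
      have : Real.sqrt r ≤ Real.sqrt v := Real.sqrt_le_sqrt hv
      calc Real.pi * (Real.sqrt r * Real.sqrt u)
          ≤ Real.pi * (Real.sqrt v * Real.sqrt u) := by
            apply mul_le_mul_of_nonneg_left _ hπ.le
            exact mul_le_mul_of_nonneg_right this (Real.sqrt_nonneg u)
        _ = Real.pi * (Real.sqrt u * Real.sqrt v) := by ring
  -- integrability
  have hint1 : IntervalIntegrable (fun s : ℝ => (s - a) ^ (-(1:ℝ)/2)) volume a b := by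
    have h0 : IntervalIntegrable (fun s : ℝ => s ^ (-(1:ℝ)/2)) volume 0 (b - a) :=
      intervalIntegrable_rpow' (by norm_num)
    simpa using h0.comp_sub_right a
  have hint2 : IntervalIntegrable (fun s : ℝ => (b - s) ^ (-(1:ℝ)/2)) volume a b := by
    have h0 : IntervalIntegrable (fun s : ℝ => s ^ (-(1:ℝ)/2)) volume 0 (b - a) :=
      intervalIntegrable_rpow' (by norm_num)
    have := (h0.comp_sub_left b).symm
    simpa using this
  have hinth : IntervalIntegrable
      (fun s : ℝ => C * ((s - a) ^ (-(1:ℝ)/2) + (b - s) ^ (-(1:ℝ)/2))) volume a b :=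
    (hint1.add hint2).const_mul C
  have hgint : IntervalIntegrable g volume a b := by
    rw [hg]
    apply hinth.mono_fun ((g_meas a b).aestronglyMeasurable)
    rw [Set.uIoc_of_le hab.le]
    filter_upwards [ae_restrict_mem measurableSet_Ioc] with s hs
    have hsa : 0 < s - a := by linarith [hs.1]
    have hsb : 0 ≤ b - s := by linarith [hs.2]
    have hrpow1 : (0:ℝ) ≤ (s - a) ^ (-(1:ℝ)/2) := Real.rpow_nonneg hsa.le _
    have hrpow2 : (0:ℝ) ≤ (b - s) ^ (-(1:ℝ)/2) := Real.rpow_nonneg hsb _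
    have hhs : 0 ≤ C * ((s - a) ^ (-(1:ℝ)/2) + (b - s) ^ (-(1:ℝ)/2)) := by positivity
    simp only [Real.norm_eq_abs]
    rw [abs_of_nonneg hhs]
    by_cases hcond : 0 < (s - a) * (b - s)
    · have hsb' : 0 < b - s := by
        by_contra h
        push_neg at h
        nlinarith
      rw [if_pos hcond, abs_of_nonneg (by positivity)]
      rcases le_total s c with hsc | hsc
      · have hbs : r ≤ b - s := by rw [hrdef]; rw [hc] at hsc; linarith
        calc 1 / (Real.pi * Real.sqrt ((s - a) * (b - s)))
            ≤ C * (s - a) ^ (-(1:ℝ)/2) := bound _ _ hsa hbs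
          _ ≤ C * ((s - a) ^ (-(1:ℝ)/2) + (b - s) ^ (-(1:ℝ)/2)) := by nlinarith
      · have has : r ≤ s - a := by rw [hrdef]; rw [hc] at hsc; linarith
        calc 1 / (Real.pi * Real.sqrt ((s - a) * (b - s)))
            = 1 / (Real.pi * Real.sqrt ((b - s) * (s - a))) := by rw [mul_comm (s-a)]
          _ ≤ C * (b - s) ^ (-(1:ℝ)/2) := bound _ _ hsb' has
          _ ≤ C * ((s - a) ^ (-(1:ℝ)/2) + (b - s) ^ (-(1:ℝ)/2)) := by nlinarith
    · rw [if_neg hcond, abs_zero]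
      exact hhs
  -- FTC
  have hcont : ContinuousOn (fun s : ℝ => Real.arcsin ((s - c)/r) / Real.pi) (Icc a b) :=
    ((Real.continuous_arcsin.comp (by continuity)).div_const Real.pi).continuousOn
  have hf : ∀ s ∈ Ioo a b,
      HasDerivAt (fun s : ℝ => Real.arcsin ((s - c)/r) / Real.pi) (g s) s := by
    intro s hs
    have hu1 : -1 < (s - c)/r := by
      rw [lt_div_iff₀ hr, hc]
      linarith [hs.1]
    have hu2 : (s - c)/r < 1 := by
      rw [div_lt_one hr, hc, hrdef]
      linarith [hs.2]
    have hd1 := Real.hasDerivAt_arcsin hu1.ne' hu2.ne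
    have hinner : HasDerivAt (fun s : ℝ => (s - c)/r) (1/r) s := by
      simpa using ((hasDerivAt_id s).sub_const c).div_const r
    have hu2' : ((s - c)/r)^2 < 1 := by nlinarith
    have hqpos : 0 < (s - a) * (b - s) := by
      have h1 : 0 < s - a := by linarith [hs.1]
      have h2 : 0 < b - s := by linarith [hs.2]
      positivity
    have hqeq : (s - a) * (b - s) = r^2 * (1 - ((s - c)/r)^2) := by
      have h1 : (s - a) * (b - s) = r^2 - (s - c)^2 := by rw [hc, hrdef]; ring
      rw [h1]
      field_simp
    have hs1 : 0 < Real.sqrt (1 - ((s - c)/r)^2) := Real.sqrt_pos.2 (by linarith)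
    have hval : g s = (1 / Real.sqrt (1 - ((s - c)/r)^2)) * (1/r) / Real.pi := by
      simp only [hg]
      rw [if_pos hqpos, hqeq, Real.sqrt_mul (sq_nonneg r), Real.sqrt_sq hr.le]
      ring
    rw [hval]
    simpa [Function.comp_def] using (hd1.comp s hinner).div_const Real.pi
  have hval : (∫ s in a..b, g s) = 1 := by
    rw [integral_eq_sub_of_hasDerivAt_of_le hab.le hcont hf hgint]
    have hb' : b - c = r := by rw [hc, hrdef]; ring
    have ha' : a - c = -r := by rw [hc, hrdef]; ring
    rw [hb', ha', div_self hr.ne', neg_div, div_self hr.ne', Real.arcsin_one,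
      Real.arcsin_neg_one]
    field_simp
    ring
  exact ⟨hgint, hval⟩

set_option maxHeartbeats 1600000 in
/-- `ψ_E` is self-similar, `ψ_E(x,y,t) = ψ_E(x/t,y/t,1)` for `t > 0`, and in the
frozen regions (points of the square `◇ = {|x|+|y|<1}` outside the closed disc of
radius `√2/2`) it equals `1` for `x > 1/2` and `0` for `x < 1/2`. -/
theorem psiE_self_similar_and_frozen_values :
    (∀ x y t : ℝ, 0 < t → psiE x y t = psiE (x / t) (y / t) 1) ∧
    (∀ x y : ℝ, |x| + |y| < 1 → 1/2 < x ^ 2 + y ^ 2 →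
      ((1/2 < x → psiE x y 1 = 1) ∧ (x < 1/2 → psiE x y 1 = 0))) := by
  constructor
  · -- self-similarity
    intro x y t ht
    have ht' : t ≠ 0 := ht.ne'
    unfold psiE
    have h1 := intervalIntegral.integral_comp_mul_left
      (a := 0) (b := 1) (fun s => psi0 (x - s) y (t - s)) ht'
    rw [mul_zero, mul_one] at h1
    calc (∫ s in (0:ℝ)..t, psi0 (x - s) y (t - s))
        = t • ∫ u in (0:ℝ)..1, psi0 (x - t * u) y (t - t * u) := by
          rw [h1, smul_smul, mul_inv_cancel₀ ht', one_smul]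
      _ = ∫ u in (0:ℝ)..1, t • psi0 (x - t * u) y (t - t * u) := by
          rw [intervalIntegral.integral_smul]
      _ = ∫ u in (0:ℝ)..1, psi0 (x / t - u) (y / t) (1 - u) := by
          apply intervalIntegral.integral_congr
          intro u _
          have hs := psi0_scale ht (x / t - u) (y / t) (1 - u)
          rw [show t * (x / t - u) = x - t * u by field_simp,
            show t * (y / t) = y by field_simp,
            show t * (1 - u) = t - t * u by ring] at hs
          simp only [smul_eq_mul, hs]
          field_simp
  · -- frozen values
    intro x y hdiam hdisc
    constructor
    · -- x > 1/2 : value 1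
      intro hx
      have hx0 : 0 < x := by linarith
      have hax : |x| = x := abs_of_pos hx0
      have hy : |y| < 1 - x := by rw [hax] at hdiam; linarith
      have hy2 : y ^ 2 < (1 - x) ^ 2 := by nlinarith [abs_nonneg y, sq_abs y]
      have hD : 0 < 2 * ((1 - x) ^ 2 - y ^ 2) := by linarith
      obtain ⟨e, hedef⟩ : ∃ e : ℝ, e = Real.sqrt (2 * ((1 - x) ^ 2 - y ^ 2)) := ⟨_, rfl⟩
      have he : 0 < e := hedef ▸ Real.sqrt_pos.2 hD
      have he2 : e ^ 2 = 2 * ((1 - x) ^ 2 - y ^ 2) := hedef ▸ Real.sq_sqrt hD.le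
      have hx1 : x < 1 := by rw [hax] at hdiam; linarith [abs_nonneg y]
      have heb : e < 2 - 2 * x := by
        have h : e ^ 2 < (2 - 2*x) ^ 2 := by
          nlinarith [sq_nonneg y, mul_pos (by linarith : (0:ℝ) < 1 - x)
            (by linarith : (0:ℝ) < 1 - x)]
        exact lt_of_pow_lt_pow_left₀ 2 (by linarith) h
      have hea : e < 2 * x - 1 := by
        have h : e ^ 2 < (2*x - 1) ^ 2 := by nlinarith
        exact lt_of_pow_lt_pow_left₀ 2 (by linarith) h
      obtain ⟨a, hadef⟩ : ∃ a : ℝ, a = 2 * x - 1 - e := ⟨_, rfl⟩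
      obtain ⟨b, hbdef⟩ : ∃ b : ℝ, b = 2 * x - 1 + e := ⟨_, rfl⟩
      have ha : 0 < a := by rw [hadef]; linarith
      have hb : b < 1 := by rw [hbdef]; linarith
      have hab : a < b := by rw [hadef, hbdef]; linarith
      have hkey : ∀ s : ℝ, (1 - s) ^ 2 - 2 * (x - s) ^ 2 - 2 * y ^ 2 = (s - a) * (b - s) := by
        intro s
        rw [hadef, hbdef]
        linear_combination -he2
      obtain ⟨g, hgdef⟩ : ∃ g : ℝ → ℝ, g = fun s =>
          if 0 < (s - a) * (b - s) then 1 / (Real.pi * Real.sqrt ((s - a) * (b - s))) else 0 :=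
        ⟨_, rfl⟩
      have hpt : ∀ s : ℝ, psi0 (x - s) y (1 - s) = g s := by
        intro s
        simp only [hgdef, psi0]
        split_ifs with h1 h2 h3
        · rw [hkey s]
        · exact absurd (by linarith [hkey s] : 0 < (s - a) * (b - s)) h2
        · exact absurd (show (x - s)^2 + y^2 < (1 - s)^2/2 by linarith [hkey s, h3]) h1
        · rfl
      obtain ⟨hgint, hgval⟩ := arcsine_aux hab
      rw [← hgdef] at hgint hgval
      -- integrability on side pieces
      have hmeas := (g_meas a b).aestronglyMeasurable (μ := volume)
      have hside : ∀ p q : ℝ, (∀ s ∈ Set.uIoc p q, g s = 0) →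
          IntervalIntegrable g volume p q := by
        intro p q h0
        apply IntervalIntegrable.congr_ae (f := fun _ : ℝ => (0:ℝ))
          (_root_.intervalIntegrable_const)
        filter_upwards [ae_restrict_mem measurableSet_uIoc] with s hs
        exact (h0 s hs).symm
      have hz1 : ∀ s ∈ Set.uIoc (0:ℝ) a, g s = 0 := by
        intro s hs
        rw [Set.uIoc_of_le ha.le] at hs
        simp only [hgdef]
        apply if_neg
        push_neg
        nlinarith [mul_nonneg (show (0:ℝ) ≤ a - s by linarith [hs.2])
          (show (0:ℝ) ≤ b - s by linarith [hs.2, hab])]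
      have hz2 : ∀ s ∈ Set.uIoc b 1, g s = 0 := by
        intro s hs
        rw [Set.uIoc_of_le hb.le] at hs
        simp only [hgdef]
        apply if_neg
        push_neg
        nlinarith [mul_nonneg (show (0:ℝ) ≤ s - a by linarith [hs.1, hab])
          (show (0:ℝ) ≤ s - b by linarith [hs.1])]
      have hi1 := hside _ _ hz1
      have hi2 := hside _ _ hz2
      have hsplit : (∫ s in (0:ℝ)..1, g s)
          = (∫ s in (0:ℝ)..a, g s) + ((∫ s in a..b, g s) + ∫ s in b..(1:ℝ), g s) := by
        rw [intervalIntegral.integral_add_adjacent_intervals hgint hi2,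
          intervalIntegral.integral_add_adjacent_intervals hi1 (hgint.trans hi2)]
      have hzint1 : (∫ s in (0:ℝ)..a, g s) = 0 := by
        rw [intervalIntegral.integral_congr (g := fun _ => (0:ℝ))
          (fun s hs => by
            rw [Set.uIcc_of_le ha.le] at hs
            rw [hgdef]
            apply if_neg
            push_neg
            nlinarith [mul_nonneg (show (0:ℝ) ≤ a - s by linarith [hs.2])
              (show (0:ℝ) ≤ b - s by linarith [hs.2, hab])])]
        simp
      have hzint2 : (∫ s in b..(1:ℝ), g s) = 0 := by
        rw [intervalIntegral.integral_congr (g := fun _ => (0:ℝ))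
          (fun s hs => by
            rw [Set.uIcc_of_le hb.le] at hs
            rw [hgdef]
            apply if_neg
            push_neg
            nlinarith [mul_nonneg (show (0:ℝ) ≤ s - a by linarith [hs.1, hab])
              (show (0:ℝ) ≤ s - b by linarith [hs.1])])]
        simp
      unfold psiE
      calc (∫ s in (0:ℝ)..1, psi0 (x - s) y (1 - s)) = ∫ s in (0:ℝ)..1, g s :=
            intervalIntegral.integral_congr (fun s _ => hpt s)
        _ = 1 := by rw [hsplit, hzint1, hzint2, hgval]; ring
    · -- x < 1/2 : value 0
      intro hx
      unfold psiE
      have h0 : Set.EqOn (fun s : ℝ => psi0 (x - s) y (1 - s)) (fun _ : ℝ => (0:ℝ))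
          (Set.uIcc (0:ℝ) 1) := by
        intro s hs
        rw [Set.uIcc_of_le zero_le_one] at hs
        simp only [psi0]
        apply if_neg
        push_neg
        nlinarith [mul_nonneg hs.1 (show (0:ℝ) ≤ 1 - 2*x by linarith), sq_nonneg s]
      rw [intervalIntegral.integral_congr h0]
      simp
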